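/- Let G = (V,E) be a hypergraph and let B be its vertex-weighted bipartite incidence graph (vertices U_V ∪ U_E, with u_v adjacent to u_e iff v ∈ e; weight ∞ on U_V, weight 1 on U_E). Then the minimum weight of a separator in B equals the min-cut capacity of G. Moreover: if (L,S,R) is a minimum-weight separator of B then ({v : u_v ∈ L}, {v : u_v ∈ R}) is a min-cut of G; and if (C, V∖C) is a min-cut of G, then (L,S,R) with L = {u_v : v ∈ C} ∪ {u_e : e ⊆ C}, S = {u_e : e ∈ δ(C)}, R = {u_v : v ∈ V∖C} ∪ {u_e : e ⊆ V∖C} is a minimum-weight separator of B. -/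

import Mathlib

open Finset

variable {V : Type*} [Fintype V] [DecidableEq V]

/-- Capacity of the cut `(C, V∖C)` of the hypergraph. -/
def cutCap (E : Finset (Finset V)) (C : Finset V) : ℕ :=
  (E.filter (fun e => (e ∩ C).Nonempty ∧ (e ∩ Cᶜ).Nonempty)).card

/-- `(C, V∖C)` is a min-cut of the hypergraph. -/
def IsMinCut (E : Finset (Finset V)) (C : Finset V) : Prop :=
  C.Nonempty ∧ Cᶜ.Nonempty ∧
    ∀ D : Finset V, D.Nonempty → Dᶜ.Nonempty → cutCap E C ≤ cutCap E D

/-- Vertex set of the bipartite incidence graph `B` of a hypergraph `(V, E)`. -/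
abbrev BVert (E : Finset (Finset V)) := V ⊕ {e // e ∈ E}

/-- No edge of `B` joins `L` and `R` (edges of `B` are incidences `v ∈ e`). -/
def NoCross (E : Finset (Finset V)) (L R : Finset (BVert E)) : Prop :=
  ∀ (v : V) (e : {e // e ∈ E}), v ∈ e.1 →
    ¬(Sum.inl v ∈ L ∧ Sum.inr e ∈ R) ∧ ¬(Sum.inl v ∈ R ∧ Sum.inr e ∈ L)

/-- `(L,S,R)` is a separator of `B`. -/
def IsSeparator (E : Finset (Finset V)) (L S R : Finset (BVert E)) : Prop :=
  Disjoint L S ∧ Disjoint L R ∧ Disjoint S R ∧ L ∪ S ∪ R = Finset.univ ∧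
    (∃ v : V, Sum.inl v ∈ L) ∧ (∃ v : V, Sum.inl v ∈ R) ∧ NoCross E L R

/-- Weight of a set of vertices of `B`: `∞` on `U_V`, `1` on `U_E`. -/
def sepWeight (E : Finset (Finset V)) (S : Finset (BVert E)) : ℕ∞ :=
  ∑ x ∈ S, Sum.elim (fun _ => (⊤ : ℕ∞)) (fun _ => 1) x

/-- The separator side `L` built from a cut `(C, V∖C)`:
`{u_v : v ∈ C} ∪ {u_e : e ⊆ C}`. -/
def mkL (E : Finset (Finset V)) (C : Finset V) : Finset (BVert E) :=
  C.image Sum.inl ∪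
    ((Finset.univ : Finset {e // e ∈ E}).filter (fun e => e.1 ⊆ C)).image Sum.inr

/-- The separator middle `S` built from a cut: `{u_e : e ∈ δ(C)}`. -/
def mkS (E : Finset (Finset V)) (C : Finset V) : Finset (BVert E) :=
  ((Finset.univ : Finset {e // e ∈ E}).filter
    (fun e => (e.1 ∩ C).Nonempty ∧ (e.1 ∩ Cᶜ).Nonempty)).image Sum.inr

/-- The separator side `R` built from a cut:
`{u_v : v ∈ V∖C} ∪ {u_e : e ⊆ V∖C}`. -/
def mkR (E : Finset (Finset V)) (C : Finset V) : Finset (BVert E) :=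
  Cᶜ.image Sum.inl ∪
    ((Finset.univ : Finset {e // e ∈ E}).filter (fun e => e.1 ⊆ Cᶜ)).image Sum.inr

set_option linter.unusedSectionVars false

lemma sepWeight_top {E : Finset (Finset V)} {S : Finset (BVert E)} {v : V}
    (h : Sum.inl v ∈ S) : sepWeight E S = ⊤ := by
  refine top_le_iff.mp ?_
  calc (⊤:ℕ∞) = Sum.elim (fun _ => (⊤:ℕ∞)) (fun _ => 1) (Sum.inl v : BVert E) := rfl
  _ ≤ _ := Finset.single_le_sum (fun i _ => zero_le) h

lemma sepWeight_card {E : Finset (Finset V)} {S : Finset (BVert E)}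
    (h : ∀ v : V, Sum.inl v ∉ S) : sepWeight E S = S.card := by
  unfold sepWeight
  have h2 : ∀ x ∈ S, Sum.elim (fun _ => (⊤:ℕ∞)) (fun _ => 1) x = 1 := by
    intro x hx
    cases x with
    | inl v => exact absurd hx (h v)
    | inr e => rfl
  rw [Finset.sum_congr rfl h2]
  simp

lemma cutCap_eq {E : Finset (Finset V)} (C : Finset V) :
    cutCap E C = ((univ : Finset {e // e ∈ E}).filter
      (fun e => (e.1 ∩ C).Nonempty ∧ (e.1 ∩ Cᶜ).Nonempty)).card := by
  unfold cutCap
  refine Finset.card_bij' (fun e he => (⟨e, (Finset.mem_filter.mp he).1⟩ : {e // e ∈ E}))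
    (fun e _ => e.1) ?_ ?_ ?_ ?_
  · intro e he
    simp only [mem_filter, mem_univ, true_and]
    exact (Finset.mem_filter.mp he).2
  · intro e he
    simp only [mem_filter, mem_univ, true_and] at he
    exact Finset.mem_filter.mpr ⟨e.2, he⟩
  · intro e he; rfl
  · intro e he; rfl

lemma sepWeight_mkS {E : Finset (Finset V)} (C : Finset V) :
    sepWeight E (mkS E C) = cutCap E C := by
  rw [sepWeight_card (by simp [mkS]), cutCap_eq]
  norm_cast
  unfold mkS
  rw [Finset.card_image_of_injective _ Sum.inr_injective]

lemma cutCap_le_sepWeight {E : Finset (Finset V)} {L S R : Finset (BVert E)}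
    (hsep : IsSeparator E L S R) :
    (cutCap E (univ.filter (fun v : V => Sum.inl v ∈ L)) : ℕ∞) ≤ sepWeight E S := by
  obtain ⟨hLS, hLR, hSR, huniv, -, -, hnc⟩ := hsep
  by_cases hS : ∃ v : V, Sum.inl v ∈ S
  · obtain ⟨v, hv⟩ := hS; rw [sepWeight_top hv]; exact le_top
  push_neg at hS
  rw [sepWeight_card hS, cutCap_eq, Nat.cast_le]
  refine Finset.card_le_card_of_injOn (fun e => Sum.inr e) ?_ ?_
  · intro e he
    simp only [mem_coe, mem_filter, mem_univ, true_and] at he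
    obtain ⟨⟨v, hv⟩, ⟨w, hw⟩⟩ := he
    rw [Finset.mem_inter, Finset.mem_filter] at hv
    obtain ⟨hve, -, hvL⟩ := hv
    rw [Finset.mem_inter, Finset.mem_compl, Finset.mem_filter] at hw
    obtain ⟨hwe, hwL⟩ := hw
    have hwL' : Sum.inl w ∉ L := fun h => hwL ⟨Finset.mem_univ _, h⟩
    have hwR : (Sum.inl w : BVert E) ∈ R := by
      have : (Sum.inl w : BVert E) ∈ L ∪ S ∪ R := huniv ▸ Finset.mem_univ _
      rcases Finset.mem_union.mp this with h | h
      · rcases Finset.mem_union.mp h with h | h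
        · exact absurd h hwL'
        · exact absurd h (hS w)
      · exact h
    have h1 : Sum.inr e ∉ R := fun h => ((hnc v e hve).1 ⟨hvL, h⟩)
    have h2 : Sum.inr e ∉ L := fun h => ((hnc w e hwe).2 ⟨hwR, h⟩)
    have : (Sum.inr e : BVert E) ∈ L ∪ S ∪ R := huniv ▸ Finset.mem_univ _
    rcases Finset.mem_union.mp this with h | h
    · rcases Finset.mem_union.mp h with h | h
      · exact absurd h h2
      · exact h
    · exact absurd h h1
  · intro a _ b _ h
    exact Sum.inr_injective h

lemma mk_separator {E : Finset (Finset V)} (hne : ∀ e ∈ E, e.Nonempty)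
    {C : Finset V} (hC : C.Nonempty) (hCc : Cᶜ.Nonempty) :
    IsSeparator E (mkL E C) (mkS E C) (mkR E C) := by
  have memL : ∀ x : BVert E, x ∈ mkL E C ↔
      (∃ v ∈ C, x = Sum.inl v) ∨ (∃ e : {e // e ∈ E}, e.1 ⊆ C ∧ x = Sum.inr e) := by
    intro x; simp [mkL, eq_comm]
  have memS : ∀ x : BVert E, x ∈ mkS E C ↔
      (∃ e : {e // e ∈ E}, ((e.1 ∩ C).Nonempty ∧ (e.1 ∩ Cᶜ).Nonempty) ∧ x = Sum.inr e) := by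
    intro x; simp [mkS, eq_comm]
  have memR : ∀ x : BVert E, x ∈ mkR E C ↔
      (∃ v ∈ Cᶜ, x = Sum.inl v) ∨ (∃ e : {e // e ∈ E}, e.1 ⊆ Cᶜ ∧ x = Sum.inr e) := by
    intro x; simp [mkR, eq_comm]
  refine ⟨?_, ?_, ?_, ?_, ?_, ?_, ?_⟩
  · rw [Finset.disjoint_left]
    intro x hx hx'
    rw [memL] at hx; rw [memS] at hx'
    obtain ⟨e, ⟨-, ⟨w, hw⟩⟩, rfl⟩ := hx'
    rcases hx with ⟨v, -, h⟩ | ⟨e', he', h⟩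
    · exact Sum.inl_ne_inr h.symm
    · obtain rfl : e = e' := Sum.inr.inj h
      rw [Finset.mem_inter, Finset.mem_compl] at hw
      exact hw.2 (he' hw.1)
  · rw [Finset.disjoint_left]
    intro x hx hx'
    rw [memL] at hx; rw [memR] at hx'
    rcases hx with ⟨v, hv, rfl⟩ | ⟨e, he, rfl⟩
    · rcases hx' with ⟨w, hw, h⟩ | ⟨e, -, h⟩
      · rw [Sum.inl.inj h] at hv
        exact (Finset.mem_compl.mp hw) hv
      · exact Sum.inl_ne_inr h
    · rcases hx' with ⟨w, -, h⟩ | ⟨e', he', h⟩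
      · exact Sum.inl_ne_inr h.symm
      · have := Sum.inr.inj h; subst this
        obtain ⟨v, hv⟩ := hne e.1 e.2
        exact (Finset.mem_compl.mp (he' hv)) (he hv)
  · rw [Finset.disjoint_left]
    intro x hx hx'
    rw [memS] at hx; rw [memR] at hx'
    obtain ⟨e, ⟨⟨w, hw⟩, -⟩, rfl⟩ := hx
    rcases hx' with ⟨v, -, h⟩ | ⟨e', he', h⟩
    · exact Sum.inl_ne_inr h.symm
    · have := Sum.inr.inj h; subst this
      rw [Finset.mem_inter] at hw
      exact (Finset.mem_compl.mp (he' hw.1)) hw.2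
  · apply Finset.eq_univ_of_forall
    intro x
    rw [Finset.mem_union, Finset.mem_union, memL, memS, memR]
    cases x with
    | inl v =>
      by_cases h : v ∈ C
      · exact Or.inl (Or.inl (Or.inl ⟨v, h, rfl⟩))
      · exact Or.inr (Or.inl ⟨v, Finset.mem_compl.mpr h, rfl⟩)
    | inr e =>
      by_cases h1 : (e.1 ∩ Cᶜ).Nonempty
      · by_cases h2 : (e.1 ∩ C).Nonempty
        · exact Or.inl (Or.inr ⟨e, ⟨h2, h1⟩, rfl⟩)
        · refine Or.inr (Or.inr ⟨e, fun v hv => ?_, rfl⟩)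
          rw [Finset.mem_compl]
          intro hvC
          exact h2 ⟨v, Finset.mem_inter.mpr ⟨hv, hvC⟩⟩
      · refine Or.inl (Or.inl (Or.inr ⟨e, fun v hv => ?_, rfl⟩))
        by_contra hvC
        exact h1 ⟨v, Finset.mem_inter.mpr ⟨hv, Finset.mem_compl.mpr hvC⟩⟩
  · obtain ⟨v, hv⟩ := hC
    exact ⟨v, (memL _).mpr (Or.inl ⟨v, hv, rfl⟩)⟩
  · obtain ⟨v, hv⟩ := hCc
    exact ⟨v, (memR _).mpr (Or.inl ⟨v, hv, rfl⟩)⟩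
  · intro v e hv
    constructor
    · rintro ⟨h1, h2⟩
      rw [memL] at h1; rw [memR] at h2
      rcases h1 with ⟨w, hw, h⟩ | ⟨e', -, h⟩
      · rw [← Sum.inl.inj h] at hw
        rcases h2 with ⟨w', hw', h'⟩ | ⟨e', he', h'⟩
        · exact Sum.inl_ne_inr h'.symm |>.elim
        · have := Sum.inr.inj h'; subst this
          exact (Finset.mem_compl.mp (he' hv)) hw
      · exact Sum.inl_ne_inr h
    · rintro ⟨h1, h2⟩
      rw [memR] at h1; rw [memL] at h2
      rcases h1 with ⟨w, hw, h⟩ | ⟨e', -, h⟩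
      · rw [← Sum.inl.inj h] at hw
        rcases h2 with ⟨w', -, h'⟩ | ⟨e', he', h'⟩
        · exact Sum.inl_ne_inr h'.symm |>.elim
        · have := Sum.inr.inj h'; subst this
          exact (Finset.mem_compl.mp hw) (he' hv)
      · exact Sum.inl_ne_inr h

/-- The minimum separator weight of `B` equals the min-cut capacity
of `G`; a minimum-weight separator `(L,S,R)` yields the min-cut
`({v : u_v ∈ L}, {v : u_v ∈ R})`; and any min-cut `(C, V∖C)` yields a
minimum-weight separator `(mkL, mkS, mkR)`. -/
theorem separator_iff_min_cut
    (E : Finset (Finset V)) (hne : ∀ e ∈ E, e.Nonempty)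
    (hV : 2 ≤ Fintype.card V)
    (C₀ : Finset V) (hC₀ : IsMinCut E C₀) :
    (∀ L S R : Finset (BVert E), IsSeparator E L S R →
        (∀ L' S' R' : Finset (BVert E), IsSeparator E L' S' R' →
          sepWeight E S ≤ sepWeight E S') →
        sepWeight E S = (cutCap E C₀ : ℕ∞) ∧
          IsMinCut E (Finset.univ.filter (fun v : V => Sum.inl v ∈ L))) ∧
      (∀ C : Finset V, IsMinCut E C →
        IsSeparator E (mkL E C) (mkS E C) (mkR E C) ∧
          ∀ L' S' R' : Finset (BVert E), IsSeparator E L' S' R' →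
            sepWeight E (mkS E C) ≤ sepWeight E S') := by
  obtain ⟨hC₀ne, hC₀c, hC₀min⟩ := hC₀
  have hsep₀ : IsSeparator E (mkL E C₀) (mkS E C₀) (mkR E C₀) := mk_separator hne hC₀ne hC₀c
  have key : ∀ L S R : Finset (BVert E), IsSeparator E L S R →
      (Finset.univ.filter (fun v : V => Sum.inl v ∈ L)).Nonempty ∧
      (Finset.univ.filter (fun v : V => Sum.inl v ∈ L))ᶜ.Nonempty := by
    intro L S R hs
    obtain ⟨-, hLR, -, -, ⟨v, hv⟩, ⟨w, hw⟩, -⟩ := hs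
    refine ⟨⟨v, Finset.mem_filter.mpr ⟨Finset.mem_univ _, hv⟩⟩, ⟨w, ?_⟩⟩
    rw [Finset.mem_compl, Finset.mem_filter]
    rintro ⟨-, hwL⟩
    exact (Finset.disjoint_left.mp hLR hwL) hw
  constructor
  · intro L S R hLSR hmin
    set CL := Finset.univ.filter (fun v : V => Sum.inl v ∈ L) with hCLdef
    obtain ⟨hCLne, hCLc⟩ := key L S R hLSR
    have h1 : (cutCap E CL : ℕ∞) ≤ sepWeight E S := cutCap_le_sepWeight hLSR
    have h2 : sepWeight E S ≤ (cutCap E C₀ : ℕ∞) := by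
      rw [← sepWeight_mkS]; exact hmin _ _ _ hsep₀
    have h3 : cutCap E C₀ ≤ cutCap E CL := hC₀min _ hCLne hCLc
    have h4 : sepWeight E S = (cutCap E C₀ : ℕ∞) :=
      le_antisymm h2 (le_trans (by exact_mod_cast h3) h1)
    refine ⟨h4, hCLne, hCLc, fun D hD hDc => ?_⟩
    have h5 : (cutCap E CL : ℕ∞) ≤ (cutCap E C₀ : ℕ∞) := h1.trans h2
    have h6 : cutCap E CL ≤ cutCap E C₀ := by exact_mod_cast h5
    exact h6.trans (hC₀min D hD hDc)
  · intro C hC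
    obtain ⟨hCne, hCc, hCmin⟩ := hC
    refine ⟨mk_separator hne hCne hCc, fun L' S' R' hs => ?_⟩
    obtain ⟨hne1, hne2⟩ := key L' S' R' hs
    rw [sepWeight_mkS]
    refine le_trans ?_ (cutCap_le_sepWeight hs)
    exact_mod_cast hCmin _ hne1 hne2
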